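/- Let ν be a probability measure on ℂ, δ > 0, τ ≥ 0, σ = 0, ε = ν({x : x ≠ 0}), and L = ( (1−ε)·2χ₂(τ) + ε·(1+τ²) ) / δ (the slope of the noiseless MSE map at m = 0). Then the state-evolution iterates m_{t+1} = Ψ(m_t) with any initial value m₀ ≥ 0 satisfy m_t ≤ L^t · m₀ for every t ≥ 0. -/

import Mathlib

open MeasureTheory Filter

/-- Complex soft thresholding: `η(x;τ) = (1 - τ/|x|)·x` if `|x| > τ`, else `0`. -/
noncomputable def softThresh (x : ℂ) (τ : ℝ) : ℂ :=
  if τ < ‖x‖ then ((1 - τ / ‖x‖ : ℝ) : ℂ) * x else 0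

/-- Risk of complex soft thresholding at amplitude `μ`:
`r(μ,τ) = ∫_{ℝ²} |η(μ + z₁ + i z₂; τ) − μ|² (1/π) e^{−(z₁²+z₂²)} dz₁ dz₂`. -/
noncomputable def softRisk (μ τ : ℝ) : ℝ :=
  ∫ z : ℝ × ℝ,
    ‖softThresh ((μ : ℂ) + (z.1 : ℂ) + Complex.I * (z.2 : ℂ)) τ - (μ : ℂ)‖ ^ 2 *
      ((1 / Real.pi) * Real.exp (-(z.1 ^ 2 + z.2 ^ 2)))

/-- `χ₂(τ) = ∫_τ^∞ ω (ω − τ)² e^{−ω²} dω`. -/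
noncomputable def chi2 (τ : ℝ) : ℝ :=
  ∫ ω in Set.Ioi τ, ω * (ω - τ) ^ 2 * Real.exp (-ω ^ 2)

/-- The MSE map `Ψ(m) = (σ² + m/δ) ∫ r(|x|/√(σ² + m/δ), τ) dν(x)`
(with the convention `Ψ(0) = 0` when `σ = 0`, via division by zero). -/
noncomputable def mseMap (ν : Measure ℂ) (δ σ τ m : ℝ) : ℝ :=
  (σ ^ 2 + m / δ) *
    ∫ x, softRisk (‖x‖ / Real.sqrt (σ ^ 2 + m / δ)) τ ∂ν

section Auxiliary

open Real Set

lemma gauss0 : ∫ x : ℝ, Real.exp (-x ^ 2) = Real.sqrt π := by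
  simpa using integral_gaussian 1

lemma gauss1 : ∫ x : ℝ, x * Real.exp (-x ^ 2) = 0 := by
  have h := (Measure.measurePreserving_neg (volume : Measure ℝ)).integral_comp
    (Homeomorph.neg ℝ).measurableEmbedding (fun x : ℝ => x * Real.exp (-x ^ 2))
  simp only [neg_sq, neg_mul, integral_neg] at h
  linarith

lemma gauss2 : ∫ x : ℝ, x ^ 2 * Real.exp (-x ^ 2) = Real.sqrt π / 2 := by
  have habs : ∫ x : ℝ, x ^ 2 * Real.exp (-x ^ 2)
      = 2 * ∫ x in Ioi (0:ℝ), x ^ 2 * Real.exp (-x ^ 2) := by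
    rw [← integral_comp_abs (f := fun x : ℝ => x ^ 2 * Real.exp (-x ^ 2))]
    congr 1; ext x; rw [sq_abs]
  have h2 := integral_rpow_mul_exp_neg_rpow (p := 2) (q := 2) (by norm_num) (by norm_num)
  have hval : ∫ x in Ioi (0:ℝ), x ^ 2 * Real.exp (-x ^ 2) = (1/2) * Real.Gamma ((2+1)/2) := by
    rw [← h2]
    refine setIntegral_congr_fun measurableSet_Ioi (fun x hx => ?_)
    rw [← Real.rpow_natCast x 2]
    norm_num
  have hgamma : Real.Gamma ((2+1)/2 : ℝ) = Real.sqrt π / 2 := by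
    have : ((2+1)/2 : ℝ) = 1/2 + 1 := by norm_num
    rw [this, Real.Gamma_add_one (by norm_num), Real.Gamma_one_half_eq]
    ring
  rw [habs, hval, hgamma]; ring

lemma int_gauss0 : MeasureTheory.Integrable (fun x : ℝ => Real.exp (-x ^ 2)) := by
  simpa using integrable_exp_neg_mul_sq (one_pos)

lemma int_gauss1 : MeasureTheory.Integrable (fun x : ℝ => x * Real.exp (-x ^ 2)) := by
  simpa using integrable_mul_exp_neg_mul_sq (one_pos)

lemma int_gauss2 : MeasureTheory.Integrable (fun x : ℝ => x ^ 2 * Real.exp (-x ^ 2)) := by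
  have := integrable_rpow_mul_exp_neg_mul_sq (b := 1) one_pos (s := 2) (by norm_num)
  simpa [Real.rpow_natCast] using this

lemma radial_integral (F : ℝ → ℝ) :
    (∫ z : ℝ × ℝ, F (‖(z.1 : ℂ) + Complex.I * (z.2 : ℂ)‖))
      = (2 * π) * ∫ r in Ioi (0:ℝ), r * F r := by
  have step1 : (∫ z : ℝ × ℝ, F (‖(z.1 : ℂ) + Complex.I * (z.2 : ℂ)‖))
      = ∫ w : ℂ, F (‖w‖) := by
    rw [← Complex.volume_preserving_equiv_real_prod.integral_comp
      Complex.measurableEquivRealProd.measurableEmbedding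
      (fun z : ℝ × ℝ => F (‖(z.1 : ℂ) + Complex.I * (z.2 : ℂ)‖))]
    congr 1; ext w
    simp only [Complex.measurableEquivRealProd_apply]
    rw [mul_comm Complex.I, Complex.re_add_im]
  rw [step1, ← Complex.integral_comp_polarCoord_symm (fun w => F (‖w‖))]
  have step2 : (∫ p in polarCoord.target, p.1 • F (‖Complex.polarCoord.symm p‖))
      = ∫ p in Ioi (0:ℝ) ×ˢ Ioo (-π) π, (fun r => r * F r) p.1 * (fun _ : ℝ => (1:ℝ)) p.2 := by
    rw [polarCoord_target]
    refine setIntegral_congr_fun (measurableSet_Ioi.prod measurableSet_Ioo) (fun p hp => ?_)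
    rw [Complex.norm_polarCoord_symm, abs_of_pos (mem_Ioi.mp hp.1)]
    simp [smul_eq_mul]
  rw [step2, MeasureTheory.Measure.volume_eq_prod,
    setIntegral_prod_mul (fun r : ℝ => r * F r) (fun _ : ℝ => (1:ℝ)) (Ioi 0) (Ioo (-π) π)]
  simp only [integral_const, MeasurableSet.univ, Measure.restrict_apply, univ_inter,
    Real.volume_Ioo, smul_eq_mul, mul_one]
  rw [measureReal_def, Measure.restrict_apply MeasurableSet.univ, univ_inter, Real.volume_Ioo,
    ENNReal.toReal_ofReal (by linarith [Real.pi_pos] : (0:ℝ) ≤ π - -π)]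
  ring

lemma abs_softThresh (y : ℂ) {τ : ℝ} (hτ : 0 ≤ τ) :
    ‖softThresh y τ‖ = if τ < ‖y‖ then ‖y‖ - τ else 0 := by
  unfold softThresh
  split_ifs with h
  · have hy : (0:ℝ) < ‖y‖ := lt_of_le_of_lt hτ h
    rw [norm_mul, Complex.norm_real, Real.norm_eq_abs, abs_of_nonneg]
    · field_simp
    · rw [sub_nonneg, div_le_one hy]; exact h.le
  · simp

lemma risk_zero {τ : ℝ} (hτ : 0 ≤ τ) : softRisk 0 τ = 2 * chi2 τ := by
  set F : ℝ → ℝ := fun r => (if τ < r then r - τ else 0) ^ 2 * (1 / π * Real.exp (-r ^ 2)) with hF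
  have h1 : softRisk 0 τ
      = ∫ z : ℝ × ℝ, F (‖(z.1 : ℂ) + Complex.I * (z.2 : ℂ)‖) := by
    unfold softRisk
    congr 1; ext z
    set y : ℂ := (z.1 : ℂ) + Complex.I * (z.2 : ℂ)
    have hy0 : ((0:ℝ):ℂ) + (z.1 : ℂ) + Complex.I * (z.2 : ℂ) = y := by
      simp [y]
    have habs2 : ‖y‖ ^ 2 = z.1 ^ 2 + z.2 ^ 2 := by
      rw [Complex.sq_norm, Complex.normSq_apply]
      simp [y]; ring
    rw [hy0, hF]
    simp only [Complex.ofReal_zero, sub_zero]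
    rw [abs_softThresh y hτ, habs2]
  rw [h1, radial_integral]
  have h2 : (fun r : ℝ => r * F r)
      = (Ioi τ).indicator (fun r => 1 / π * (r * (r - τ) ^ 2 * Real.exp (-r ^ 2))) := by
    funext r
    by_cases h : τ < r
    · rw [indicator_of_mem (mem_Ioi.mpr h)]
      simp only [hF, if_pos h]; ring
    · rw [indicator_of_notMem (by simpa using h)]
      simp only [hF, if_neg h]; ring
  rw [h2, integral_indicator measurableSet_Ioi, Measure.restrict_restrict measurableSet_Ioi,
    Ioi_inter_Ioi, max_eq_left hτ, integral_const_mul]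
  rw [← chi2]
  field_simp

lemma soft_contract (y : ℂ) {μ τ : ℝ} (hμ : 0 ≤ μ) (hτ : 0 ≤ τ) :
    ‖softThresh y τ - (μ : ℂ)‖ ≤ ‖y - ((μ : ℂ) + (τ : ℂ))‖ := by
  unfold softThresh
  split_ifs with h
  · set R := ‖y‖ with hR
    have hR0 : 0 < R := lt_of_le_of_lt hτ h
    have hR2 : R ^ 2 = y.re ^ 2 + y.im ^ 2 := by
      rw [hR, Complex.sq_norm, Complex.normSq_apply]; ring
    have hp : y.re ≤ R := by nlinarith [sq_nonneg y.im, sq_nonneg (R + y.re)]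
    rw [Complex.norm_def, Complex.norm_def]
    apply Real.sqrt_le_sqrt
    rw [Complex.normSq_apply, Complex.normSq_apply]
    simp only [Complex.sub_re, Complex.sub_im, Complex.mul_re, Complex.mul_im,
      Complex.ofReal_re, Complex.ofReal_im, Complex.add_re, Complex.add_im]
    set t : ℝ := τ / R with ht
    have ht0 : 0 ≤ t := div_nonneg hτ hR0.le
    have htτ : τ = t * R := by rw [ht]; field_simp
    rw [htτ]
    have key : (y.re - (μ + t*R))^2 + y.im^2
        - (((1-t)*y.re - μ)^2 + ((1-t)*y.im)^2) = 2*t*(R - y.re)*(R + μ) := by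
      linear_combination (t^2 - 2*t) * hR2
    nlinarith [key, mul_nonneg (mul_nonneg ht0 (sub_nonneg.2 hp)) (add_nonneg hR0.le hμ)]
  · push_neg at h
    have h1 : ‖(0:ℂ) - (μ:ℂ)‖ = μ := by
      simp [abs_of_nonneg hμ]
    rw [h1]
    have h2 : ‖(μ:ℂ) + (τ:ℂ)‖ - ‖y‖
        ≤ ‖y - ((μ:ℂ) + (τ:ℂ))‖ := by
      rw [norm_sub_rev]
      exact norm_sub_norm_le _ _
    have h3 : ‖(μ:ℂ) + (τ:ℂ)‖ = μ + τ := by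
      rw [← Complex.ofReal_add, Complex.norm_real, Real.norm_eq_abs, abs_of_nonneg (by linarith)]
    linarith

lemma risk_le {μ τ : ℝ} (hμ : 0 ≤ μ) (hτ : 0 ≤ τ) : softRisk μ τ ≤ 1 + τ ^ 2 := by
  classical
  set A : ℝ → ℝ := fun x => (x - τ) ^ 2 * (1 / π * Real.exp (-x ^ 2)) with hA
  set B : ℝ → ℝ := fun x => Real.exp (-x ^ 2) with hB
  set C : ℝ → ℝ := fun x => 1 / π * Real.exp (-x ^ 2) with hC
  set D : ℝ → ℝ := fun x => x ^ 2 * Real.exp (-x ^ 2) with hD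
  have hiA : Integrable A := by
    have : Integrable (fun x : ℝ => 1/π * ((x ^ 2 * Real.exp (-x^2))
        + ((-2*τ) * (x * Real.exp (-x^2)) + τ^2 * Real.exp (-x^2)))) :=
      ((int_gauss2.add ((int_gauss1.const_mul (-2*τ)).add (int_gauss0.const_mul (τ^2)))).const_mul
        (1/π))
    exact this.congr (Filter.Eventually.of_forall fun x => by simp only [hA]; ring)
  have hiC : Integrable C := int_gauss0.const_mul (1/π)
  have hg : Integrable (fun z : ℝ × ℝ => A z.1 * B z.2 + C z.1 * D z.2) := by
    rw [MeasureTheory.Measure.volume_eq_prod]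
    exact (hiA.mul_prod int_gauss0).add (hiC.mul_prod int_gauss2)
  have hbound : ∀ z : ℝ × ℝ,
      ‖softThresh ((μ : ℂ) + (z.1 : ℂ) + Complex.I * (z.2 : ℂ)) τ - (μ : ℂ)‖ ^ 2 *
        ((1 / Real.pi) * Real.exp (-(z.1 ^ 2 + z.2 ^ 2)))
      ≤ A z.1 * B z.2 + C z.1 * D z.2 := by
    intro z
    have h1 := soft_contract ((μ : ℂ) + (z.1 : ℂ) + Complex.I * (z.2 : ℂ)) hμ hτ
    have h2 : ‖((μ : ℂ) + (z.1 : ℂ) + Complex.I * (z.2 : ℂ)) - ((μ : ℂ) + (τ : ℂ))‖ ^ 2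
        = (z.1 - τ) ^ 2 + z.2 ^ 2 := by
      rw [Complex.sq_norm, Complex.normSq_apply]
      simp
      ring
    have h3 : ‖softThresh ((μ:ℂ) + (z.1:ℂ) + Complex.I * (z.2:ℂ)) τ - (μ:ℂ)‖ ^ 2
        ≤ (z.1 - τ) ^ 2 + z.2 ^ 2 := by
      rw [← h2]
      exact pow_le_pow_left₀ (norm_nonneg _) h1 2
    have h4 : ((z.1 - τ) ^ 2 + z.2 ^ 2) * ((1 / Real.pi) * Real.exp (-(z.1 ^ 2 + z.2 ^ 2)))
        = A z.1 * B z.2 + C z.1 * D z.2 := by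
      simp only [hA, hB, hC, hD, neg_add, Real.exp_add]
      ring
    calc _ ≤ ((z.1 - τ) ^ 2 + z.2 ^ 2) * ((1 / Real.pi) * Real.exp (-(z.1 ^ 2 + z.2 ^ 2))) := by
          apply mul_le_mul_of_nonneg_right h3 (by positivity)
      _ = _ := h4
  have hval : (∫ z : ℝ × ℝ, (A z.1 * B z.2 + C z.1 * D z.2)) = 1 + τ ^ 2 := by
    rw [MeasureTheory.Measure.volume_eq_prod,
      integral_add (hiA.mul_prod int_gauss0) (hiC.mul_prod int_gauss2),
      integral_prod_mul A B, integral_prod_mul C D]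
    have hvA : ∫ x, A x = 1/π * (Real.sqrt π / 2 + τ^2 * Real.sqrt π) := by
      have : (∫ x, A x) = ∫ x : ℝ, 1/π * ((x ^ 2 * Real.exp (-x^2))
          + ((-2*τ) * (x * Real.exp (-x^2)) + τ^2 * Real.exp (-x^2))) := by
        congr 1; funext x; simp only [hA]; ring
      have h5 : Integrable (fun x : ℝ => -2*τ*(x*Real.exp (-x^2)) + τ^2*Real.exp (-x^2)) :=
        (int_gauss1.const_mul (-2*τ)).add (int_gauss0.const_mul (τ^2))
      have h6 : Integrable (fun x : ℝ => -2*τ*(x*Real.exp (-x^2))) :=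
        int_gauss1.const_mul (-2*τ)
      have h7 : Integrable (fun x : ℝ => τ^2*Real.exp (-x^2)) :=
        int_gauss0.const_mul (τ^2)
      rw [this, integral_const_mul, integral_add int_gauss2 h5, integral_add h6 h7,
        integral_const_mul, integral_const_mul, gauss0, gauss1, gauss2]
      ring
    have hvC : ∫ x, C x = 1/π * Real.sqrt π := by
      rw [hC]; simp only []
      rw [integral_const_mul, gauss0]
    rw [hvA, hvC, hB, hD, gauss0, gauss2]
    have hππ : Real.sqrt π * Real.sqrt π = π := Real.mul_self_sqrt pi_pos.le
    field_simp
    nlinarith [hππ, pi_pos]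
  calc softRisk μ τ ≤ ∫ z : ℝ × ℝ, (A z.1 * B z.2 + C z.1 * D z.2) := by
        unfold softRisk
        refine integral_mono_of_nonneg (Filter.Eventually.of_forall fun z => by positivity)
          hg (Filter.Eventually.of_forall hbound)
    _ = 1 + τ ^ 2 := hval

lemma softRisk_nonneg (μ τ : ℝ) : 0 ≤ softRisk μ τ := by
  refine integral_nonneg fun z => ?_
  exact mul_nonneg (pow_nonneg (norm_nonneg _) 2) (by positivity)

lemma chi2_nonneg {τ : ℝ} (hτ : 0 ≤ τ) : 0 ≤ chi2 τ := by
  refine setIntegral_nonneg measurableSet_Ioi fun ω hω => ?_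
  have h0 : 0 ≤ ω := le_trans hτ (le_of_lt (mem_Ioi.mp hω))
  exact mul_nonneg (mul_nonneg h0 (sq_nonneg _)) (Real.exp_pos _).le

end Auxiliary

/-- Linear convergence bound for noiseless state evolution: with `ε = ν({x ≠ 0})` and
`L = ((1−ε)·2χ₂(τ) + ε(1+τ²))/δ` (the slope of the noiseless MSE map at `m = 0`),
the iterates `m_{t+1} = Ψ(m_t)` with any `m₀ ≥ 0` satisfy `m_t ≤ L^t · m₀` for all `t`. -/
theorem mseMap_linear_convergence (ν : Measure ℂ) (hν : IsProbabilityMeasure ν)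
    (δ τ : ℝ) (hδ : 0 < δ) (hτ : 0 ≤ τ)
    (L : ℝ)
    (hL : L = ((1 - (ν {x : ℂ | x ≠ 0}).toReal) * (2 * chi2 τ) +
        (ν {x : ℂ | x ≠ 0}).toReal * (1 + τ ^ 2)) / δ)
    (m₀ : ℝ) (hm₀ : 0 ≤ m₀) (seq : ℕ → ℝ) (h0 : seq 0 = m₀)
    (hrec : ∀ t : ℕ, seq (t + 1) = mseMap ν δ 0 τ (seq t)) :
    ∀ t : ℕ, seq t ≤ L ^ t * m₀ := by
  classical
  set ε : ℝ := (ν {x : ℂ | x ≠ 0}).toReal with hε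
  set Cst : ℝ := (1 - ε) * (2 * chi2 τ) + ε * (1 + τ ^ 2) with hCst
  have hcompl : {x : ℂ | x ≠ 0} = ({0} : Set ℂ)ᶜ := by ext x; simp
  have hν0 : (ν ({0} : Set ℂ)).toReal = 1 - ε := by
    have hsum : ν ({0} : Set ℂ) + ν (({0} : Set ℂ)ᶜ) = 1 := by
      rw [measure_add_measure_compl (measurableSet_singleton 0), measure_univ]
    have h1 : (ν ({0} : Set ℂ)).toReal + (ν (({0} : Set ℂ)ᶜ)).toReal = 1 := by
      rw [← ENNReal.toReal_add (measure_ne_top ν _) (measure_ne_top ν _), hsum,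
        ENNReal.toReal_one]
    rw [hε, hcompl]
    linarith
  have hε0 : 0 ≤ ε := ENNReal.toReal_nonneg
  have hε1 : ε ≤ 1 := by
    rw [hε]
    have h := measure_mono (μ := ν) (Set.subset_univ {x : ℂ | x ≠ 0})
    calc (ν {x : ℂ | x ≠ 0}).toReal ≤ (ν Set.univ).toReal :=
          ENNReal.toReal_mono (measure_ne_top ν _) h
      _ = 1 := by rw [measure_univ, ENNReal.toReal_one]
  have hC0 : 0 ≤ Cst := by
    rw [hCst]
    have := chi2_nonneg hτ
    have h1 : (0:ℝ) ≤ 1 + τ ^ 2 := by positivity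
    nlinarith
  have hL0 : 0 ≤ L := by
    rw [hL]
    exact div_nonneg hC0 hδ.le
  -- key step bound
  have step : ∀ m : ℝ, 0 ≤ m → mseMap ν δ 0 τ m ≤ L * m ∧ 0 ≤ mseMap ν δ 0 τ m := by
    intro m hm
    have hc0 : (0:ℝ) ≤ (0:ℝ) ^ 2 + m / δ := by positivity
    have hI0 : 0 ≤ ∫ x, softRisk (‖x‖ / Real.sqrt ((0:ℝ) ^ 2 + m / δ)) τ ∂ν :=
      integral_nonneg fun x => softRisk_nonneg _ _
    set g : ℂ → ℝ := fun x =>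
      (1 + τ ^ 2) + ({(0:ℂ)} : Set ℂ).indicator (fun _ => 2 * chi2 τ - (1 + τ ^ 2)) x with hgdef
    have hgint : Integrable g ν := by
      refine (integrable_const (1 + τ ^ 2)).add ?_
      exact (integrable_const _).indicator (measurableSet_singleton 0)
    have hpt : ∀ x : ℂ,
        softRisk (‖x‖ / Real.sqrt ((0:ℝ) ^ 2 + m / δ)) τ ≤ g x := by
      intro x
      by_cases hx : x = 0
      · subst hx
        simp only [hgdef, norm_zero, zero_div, Set.indicator_of_mem (Set.mem_singleton (0:ℂ))]
        rw [risk_zero hτ]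
        ring_nf
        exact le_refl _
      · have : g x = 1 + τ ^ 2 := by
          simp only [hgdef, Set.indicator_of_notMem (by simpa using hx : x ∉ ({(0:ℂ)} : Set ℂ))]
          ring
        rw [this]
        exact risk_le (div_nonneg (norm_nonneg x) (Real.sqrt_nonneg _)) hτ
    have hgval : ∫ x, g x ∂ν = Cst := by
      rw [hgdef]
      rw [integral_add (integrable_const _)
        ((integrable_const _).indicator (measurableSet_singleton 0))]
      rw [integral_const, integral_indicator_const _ (measurableSet_singleton 0)]
      rw [measureReal_def, measureReal_def, measure_univ, hν0]
      simp only [ENNReal.toReal_one, one_smul, smul_eq_mul]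
      rw [hCst]
      ring
    have hIC : (∫ x, softRisk (‖x‖ / Real.sqrt ((0:ℝ) ^ 2 + m / δ)) τ ∂ν) ≤ Cst := by
      rw [← hgval]
      exact integral_mono_of_nonneg
        (Filter.Eventually.of_forall fun x => softRisk_nonneg _ _) hgint
        (Filter.Eventually.of_forall hpt)
    constructor
    · unfold mseMap
      calc ((0:ℝ) ^ 2 + m / δ) *
            ∫ x, softRisk (‖x‖ / Real.sqrt ((0:ℝ) ^ 2 + m / δ)) τ ∂ν
          ≤ ((0:ℝ) ^ 2 + m / δ) * Cst := mul_le_mul_of_nonneg_left hIC hc0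
        _ = L * m := by
            rw [hL]
            field_simp
            ring
    · exact mul_nonneg hc0 hI0
  -- induction
  have main : ∀ t : ℕ, 0 ≤ seq t ∧ seq t ≤ L ^ t * m₀ := by
    intro t
    induction t with
    | zero => exact ⟨by rw [h0]; exact hm₀, by rw [h0]; simp⟩
    | succ t ih =>
      obtain ⟨ih0, ih1⟩ := ih
      obtain ⟨hs1, hs2⟩ := step (seq t) ih0
      refine ⟨by rw [hrec t]; exact hs2, ?_⟩
      rw [hrec t]
      calc mseMap ν δ 0 τ (seq t) ≤ L * seq t := hs1
        _ ≤ L * (L ^ t * m₀) := mul_le_mul_of_nonneg_left ih1 hL0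
        _ = L ^ (t + 1) * m₀ := by ring
  exact fun t => (main t).2
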